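/- arXiv:2605.08100 — 3 statements merged into one kernel-verified Lean document; each statement's English description precedes it below -/
import Mathlib

section
/- (Skew power rule) Let R[x;σ,δ] be an Ore extension with σ an endomorphism and δ a q-skew σ-derivation. Then for all a ∈ R and n ∈ ℕ, xⁿ·a = Σ_{i=0}^{n} [n choose i]_q · σ^i(δ^{n−i}(a)) · x^i in R[x;σ,δ]. -/
/-- The Gaussian (q-)binomial coefficient `[n choose i]_q`. -/
def qBinom {k : Type*} [Field k] (q : k) : ℕ → ℕ → k
  | _, 0 => 1
  | 0, _ + 1 => 0
  | n + 1, i + 1 => qBinom q n i + q ^ (i + 1) * qBinom q n (i + 1)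

lemma qBinom_zero_right {k : Type*} [Field k] (q : k) (n : ℕ) : qBinom q n 0 = 1 := by
  cases n <;> rfl

lemma qBinom_of_lt {k : Type*} [Field k] (q : k) : ∀ n i : ℕ, n < i → qBinom q n i = 0
  | 0, _ + 1, _ => rfl
  | n + 1, i + 1, h => by
    rw [qBinom, qBinom_of_lt q n i (by omega), qBinom_of_lt q n (i + 1) (by omega)]
    ring

/-- Skew power rule in an Ore extension `R[x;σ,δ]` (here realized as a ring `S`
which is free as a left `R`-module with basis the powers of `X`, with
`X·r = σ(r)·X + δ(r)`): `xⁿ·a = Σ_{i=0}^{n} [n choose i]_q • σ^i(δ^{n−i} a) · x^i`. -/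
theorem ore_skew_power_rule {k : Type*} [Field k] {R : Type*} [Ring R] [Algebra k R]
    (σ : R →ₐ[k] R) (δ : R →ₗ[k] R)
    (hleib : ∀ a b : R, δ (a * b) = σ a * δ b + δ a * b)
    (q : k) (hq0 : q ≠ 0)
    (hq : ∀ a : R, q • σ (δ a) = δ (σ a))
    {S : Type*} [Ring S] [Algebra k S] (φ : R →ₐ[k] S) (hφ : Function.Injective φ)
    (X : S)
    (hbasis : ∀ s : S, ∃! p : ℕ →₀ R, s = ∑ i ∈ p.support, φ (p i) * X ^ i)
    (hrel : ∀ r : R, X * φ r = φ (σ r) * X + φ (δ r)) :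
    ∀ (a : R) (n : ℕ),
      X ^ n * φ a =
        ∑ i ∈ Finset.range (n + 1),
          φ (qBinom q n i • (⇑σ)^[i] ((⇑δ)^[n - i] a)) * X ^ i := by
  have hiter_smul : ∀ (i : ℕ) (c : k) (r : R), (⇑σ)^[i] (c • r) = c • (⇑σ)^[i] r := by
    intro i
    induction i with
    | zero => simp
    | succ i ih =>
      intro c r
      rw [Function.iterate_succ_apply, map_smul, ih, ← Function.iterate_succ_apply]
  have hδσ : ∀ (i : ℕ) (r : R), δ ((⇑σ)^[i] r) = q ^ i • (⇑σ)^[i] (δ r) := by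
    intro i
    induction i with
    | zero => simp
    | succ i ih =>
      intro r
      rw [Function.iterate_succ_apply, ih, ← hq, hiter_smul, smul_smul,
        ← Function.iterate_succ_apply, pow_succ]
  intro a n
  induction n generalizing a with
  | zero => simp [qBinom_zero_right]
  | succ n ih =>
    -- coefficient functions
    set cc : ℕ → R := fun i => qBinom q n i • (⇑σ)^[i] ((⇑δ)^[n - i] a) with hcc
    set dd : ℕ → R := fun i => qBinom q (n + 1) i • (⇑σ)^[i] ((⇑δ)^[n + 1 - i] a) with hdd
    have hcc_top : cc (n + 1) = 0 := by
      simp [hcc, qBinom_of_lt q n (n + 1) (by omega)]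
    have hd0 : dd 0 = δ (cc 0) := by
      simp only [hcc, hdd, qBinom_zero_right, one_smul, Function.iterate_zero, id_eq,
        Nat.sub_zero]
      rw [← Function.iterate_succ_apply' δ]
    have coeff : ∀ i : ℕ, dd (i + 1) = σ (cc i) + δ (cc (i + 1)) := by
      intro i
      have h1 : n + 1 - (i + 1) = n - i := by omega
      simp only [hcc, hdd, h1, map_smul, ← Function.iterate_succ_apply' σ]
      rcases lt_or_ge i n with h | h
      · have h2 : n - i = (n - (i + 1)) + 1 := by omega
        have h2' : (n - (i + 1)).succ = n - i := by omega
        rw [qBinom, hδσ, ← Function.iterate_succ_apply' δ, h2']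
        module
      · have h3 : qBinom q n (i + 1) = 0 := qBinom_of_lt q n (i + 1) (by omega)
        rw [qBinom, h3]
        simp
    calc X ^ (n + 1) * φ a = X * (X ^ n * φ a) := by rw [pow_succ', mul_assoc]
      _ = ∑ i ∈ Finset.range (n + 1),
            (φ (σ (cc i)) * X ^ (i + 1) + φ (δ (cc i)) * X ^ i) := by
          rw [ih, Finset.mul_sum]
          refine Finset.sum_congr rfl fun i _ => ?_
          rw [← mul_assoc, hrel, add_mul, mul_assoc, ← pow_succ']
      _ = (∑ i ∈ Finset.range (n + 1), φ (σ (cc i)) * X ^ (i + 1))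
            + ∑ i ∈ Finset.range (n + 1), φ (δ (cc i)) * X ^ i :=
          Finset.sum_add_distrib
      _ = (∑ i ∈ Finset.range (n + 1), φ (σ (cc i)) * X ^ (i + 1))
            + ((∑ i ∈ Finset.range (n + 1), φ (δ (cc (i + 1))) * X ^ (i + 1))
              + φ (δ (cc 0)) * X ^ 0) := by
          congr 1
          rw [Finset.sum_range_succ' (fun i => φ (δ (cc i)) * X ^ i) n]
          congr 1
          rw [Finset.sum_range_succ]
          simp [hcc_top]
      _ = ∑ i ∈ Finset.range (n + 2), φ (dd i) * X ^ i := by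
          rw [Finset.sum_range_succ' (fun i => φ (dd i) * X ^ i) (n + 1), hd0]
          have : ∀ i, φ (dd (i + 1)) * X ^ (i + 1)
              = φ (σ (cc i)) * X ^ (i + 1) + φ (δ (cc (i + 1))) * X ^ (i + 1) := by
            intro i
            rw [coeff i, map_add, add_mul]
          simp only [this, Finset.sum_add_distrib, add_assoc]
end

section
/- Let δ be a locally nilpotent q-skew σ-derivation on a k-algebra R, a ∈ R with N = nildeg(a), and n > N. If m > dn/(n−N) for some d ≥ 1, then for all indices i_1,…,i_{m−1} ∈ {0,…,n} with i_1 + ⋯ + i_{m−1} = (d−1)n, the iterated product a·F_{i_{m−1}}(a·F_{i_{m−2}}(⋯a·F_{i_1}(a)⋯)) = 0, where F_i(a) = [n choose i]_q σ^i(δ^{n−i}(a)). Consequently the coefficient of x^{dn} in (a xⁿ)^m vanishes: ((a xⁿ)^m)_{dn} = 0. -/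
/-- The nested product `a·F_{i_{m−1}}(a·F_{i_{m−2}}(⋯ a·F_{i_1}(a)⋯))`. -/
def nestProd {R : Type*} [Ring R] (a : R) (F : ℕ → R → R) : List ℕ → R
  | [] => a
  | i :: t => a * F i (nestProd a F t)

/-- The nilpotency degree: the least `N` with `δ^[N] a = 0`. -/
noncomputable def nildeg {R : Type*} [Ring R] (δ : R → R) (a : R) : ℕ :=
  sInf {N : ℕ | δ^[N] a = 0}

section Aux
variable {k : Type*} [Field k] {R : Type*} [Ring R] [Algebra k R]
variable (σ : R ≃ₐ[k] R) (δ : R →ₗ[k] R) (q : k)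

lemma qBinom_eq_zero (q : k) : ∀ {n i : ℕ}, n < i → qBinom q n i = 0
  | 0, _ + 1, _ => rfl
  | n + 1, i + 1, h => by
      have h1 : n < i := by omega
      have h2 : n < i + 1 := by omega
      simp [qBinom, qBinom_eq_zero q h1, qBinom_eq_zero q h2]

lemma iter_zero : ∀ p : ℕ, (⇑δ)^[p] 0 = 0 :=
  fun p => Function.iterate_fixed (map_zero δ) p

lemma iter_smul (c : k) : ∀ (p : ℕ) (y : R), (⇑δ)^[p] (c • y) = c • (⇑δ)^[p] y := by
  intro p
  induction p with
  | zero => simp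
  | succ p ih => intro y; simp [Function.iterate_succ_apply, map_smul, ih]

lemma iter_add : ∀ (p : ℕ) (x y : R), (⇑δ)^[p] (x + y) = (⇑δ)^[p] x + (⇑δ)^[p] y := by
  intro p
  induction p with
  | zero => simp
  | succ p ih => intro x y; simp [Function.iterate_succ_apply, map_add, ih]

lemma sig_iter_zero : ∀ i : ℕ, (⇑σ)^[i] (0 : R) = 0 :=
  fun i => Function.iterate_fixed (map_zero σ) i

lemma iter_mono {a : R} {A : ℕ} (h : (⇑δ)^[A] a = 0) {K : ℕ} (hK : A ≤ K) :
    (⇑δ)^[K] a = 0 := by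
  obtain ⟨B, rfl⟩ := Nat.exists_eq_add_of_le hK
  rw [Nat.add_comm, Function.iterate_add_apply, h, iter_zero]

variable (hq : ∀ a : R, q • σ (δ a) = δ (σ a))
include hq

lemma delta_sig_iter : ∀ (p : ℕ) (a : R), (⇑δ)^[p] (σ a) = q ^ p • σ ((⇑δ)^[p] a) := by
  intro p
  induction p with
  | zero => simp
  | succ p ih =>
      intro a
      rw [Function.iterate_succ_apply, ← hq, iter_smul, ih, smul_smul, ← pow_succ',
        Function.iterate_succ_apply]

lemma delta_sigpow_iter : ∀ (i p : ℕ) (a : R),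
    (⇑δ)^[p] ((⇑σ)^[i] a) = q ^ (p * i) • (⇑σ)^[i] ((⇑δ)^[p] a) := by
  intro i
  induction i with
  | zero => simp
  | succ i ih =>
      intro p a
      rw [Function.iterate_succ_apply', delta_sig_iter σ δ q hq, ih, map_smul, smul_smul,
        ← pow_add, Function.iterate_succ_apply']
      ring_nf

variable (hleib : ∀ a b : R, δ (a * b) = σ a * δ b + δ a * b)
include hleib

lemma prod_zero : ∀ (K : ℕ) (a b : R),
    (∀ p r : ℕ, p + r = K → (⇑δ)^[p] a = 0 ∨ (⇑δ)^[r] b = 0) → (⇑δ)^[K] (a * b) = 0 := by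
  intro K
  induction K with
  | zero =>
      intro a b h
      rcases h 0 0 rfl with h' | h' <;> simp at h' <;> simp [h']
  | succ K ih =>
      intro a b h
      rw [Function.iterate_succ_apply, hleib, iter_add]
      rw [ih (σ a) (δ b) ?_, ih (δ a) b ?_, add_zero]
      · intro p r hpr
        rcases h (p + 1) r (by omega) with h' | h'
        · left; rw [Function.iterate_succ_apply] at h'; exact h'
        · right; exact h'
      · intro p r hpr
        rcases h p (r + 1) (by omega) with h' | h'
        · left; rw [delta_sig_iter σ δ q hq, h', map_zero, smul_zero]
        · right; rw [Function.iterate_succ_apply] at h'; exact h'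

lemma nest_zero (a : R) (N : ℕ) (hNa : (⇑δ)^[N] a = 0) (n : ℕ) :
    ∀ L : List ℕ, (∀ i ∈ L, i ≤ n) → ∀ K : ℕ,
      (L.length + 1) * N + L.sum ≤ K + L.length * n →
      (⇑δ)^[K] (nestProd a (fun i b => qBinom q n i • (⇑σ)^[i] ((⇑δ)^[n - i] b)) L) = 0 := by
  intro L
  induction L with
  | nil =>
      intro _ K hK
      simp only [nestProd, List.length_nil, List.sum_nil] at *
      exact iter_mono δ hNa (by omega)
  | cons i t ih =>
      intro hle K hK
      simp only [nestProd]
      set P := nestProd a (fun i b => qBinom q n i • (⇑σ)^[i] ((⇑δ)^[n - i] b)) t with hP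
      have hi : i ≤ n := hle i List.mem_cons_self
      have hle' : ∀ j ∈ t, j ≤ n := fun j hj => hle j (List.mem_cons_of_mem i hj)
      have hK' : (t.length + 1) * N + N + (i + t.sum) ≤ K + (t.length * n + n) := by
        have e1 : (i :: t).length + 1 = t.length + 1 + 1 := by simp
        have e2 : ((i :: t).length + 1) * N = (t.length + 1) * N + N := by rw [e1]; ring
        have e3 : (i :: t).length * n = t.length * n + n := by simp; ring
        have e4 : (i :: t).sum = i + t.sum := by simp
        omega
      set A := (t.length + 1) * N with hA
      set C := t.length * n with hC
      by_cases hKN : N ≤ K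
      · -- δ^[K-N+(n-i)] P = 0
        have hPz : (⇑δ)^[(K - N) + (n - i)] P = 0 := ih hle' _ (by omega)
        apply prod_zero σ δ q hq hleib
        intro p r hpr
        by_cases hp : N ≤ p
        · exact Or.inl (iter_mono δ hNa hp)
        · right
          have hr : K - N ≤ r := by omega
          apply iter_mono δ _ hr
          rw [iter_smul, delta_sigpow_iter σ δ q hq, ← Function.iterate_add_apply, hPz,
            sig_iter_zero, smul_zero, smul_zero]
      · -- the inner factor is zero
        have hPz : (⇑δ)^[n - i] P = 0 := ih hle' _ (by omega)
        rw [hPz, sig_iter_zero, smul_zero, mul_zero, iter_zero]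

end Aux

section Aux2
variable {k : Type*} [Field k] {R : Type*} [Ring R] [Algebra k R]
variable (σ : R ≃ₐ[k] R) (δ : R →ₗ[k] R) (q : k)
variable {S : Type*} [Ring S] [Algebra k S] (φ : R →ₐ[k] S) (X : S)
variable (hq : ∀ a : R, q • σ (δ a) = δ (σ a))
variable (hrel : ∀ r : R, X * (φ r) = φ (σ r) * X + φ (δ r))
include hq hrel

lemma pow_X_mul : ∀ (ν : ℕ) (r : R), X ^ ν * φ r =
    ∑ i ∈ Finset.range (ν + 1), φ (qBinom q ν i • (⇑σ)^[i] ((⇑δ)^[ν - i] r)) * X ^ i := by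
  intro ν
  induction ν with
  | zero =>
      intro r
      simp [qBinom]
  | succ ν ih =>
      intro r
      set g : ℕ → R := fun i => qBinom q ν i • (⇑σ)^[i] ((⇑δ)^[ν - i] r) with hg
      set h : ℕ → R := fun i => qBinom q (ν + 1) i • (⇑σ)^[i] ((⇑δ)^[ν + 1 - i] r) with hh
      have hgtop : g (ν + 1) = 0 := by
        simp [hg, qBinom_eq_zero q (Nat.lt_succ_self ν)]
      have k1 : h 0 = δ (g 0) := by
        simp only [hg, hh]
        show qBinom q (ν+1) 0 • _ = _
        have h1 : qBinom q (ν+1) 0 = 1 := rfl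
        have h2 : qBinom q ν 0 = 1 := by cases ν <;> rfl
        rw [h1, h2, one_smul, one_smul]
        simp [Function.iterate_succ_apply']
      have k2 : ∀ i ≤ ν, h (i + 1) = σ (g i) + δ (g (i + 1)) := by
        intro i hi
        have e1 : σ (g i) = qBinom q ν i • (⇑σ)^[i+1] ((⇑δ)^[ν - i] r) := by
          rw [hg, map_smul]
          congr 1
          exact (Function.iterate_succ_apply' (⇑σ) i _).symm
        have e2 : δ (g (i+1)) =
            (q ^ (i+1) * qBinom q ν (i+1)) • (⇑σ)^[i+1] ((⇑δ)^[ν - (i+1) + 1] r) := by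
          rw [hg, map_smul]
          have := delta_sigpow_iter σ δ q hq (i+1) 1 ((⇑δ)^[ν - (i+1)] r)
          simp only [Function.iterate_one, one_mul] at this
          rw [this, smul_smul, mul_comm (qBinom q ν (i+1)) (q ^ (i+1)),
            ← Function.iterate_succ_apply' (⇑δ)]
        rcases Nat.lt_or_ge i ν with hlt | hge
        · have e3 : ν - (i+1) + 1 = ν - i := by omega
          have e4 : ν + 1 - (i+1) = ν - i := by omega
          rw [e1, e2, e3, hh]
          show (qBinom q ν i + q ^ (i + 1) * qBinom q ν (i + 1)) • _ = _
          rw [e4, add_smul]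
        · have hiν : ν = i := by omega
          subst hiν
          rw [e1, e2, qBinom_eq_zero q (Nat.lt_succ_self ν), mul_zero, zero_smul, add_zero, hh]
          show (qBinom q ν ν + q ^ (ν + 1) * qBinom q ν (ν + 1)) • _ = _
          rw [qBinom_eq_zero q (Nat.lt_succ_self ν), mul_zero, add_zero]
          simp
      calc X ^ (ν + 1) * φ r = X * (X ^ ν * φ r) := by rw [pow_succ', mul_assoc]
        _ = X * ∑ i ∈ Finset.range (ν + 1), φ (g i) * X ^ i := by rw [ih]
        _ = ∑ i ∈ Finset.range (ν + 1), (φ (σ (g i)) * X ^ (i+1) + φ (δ (g i)) * X ^ i) := by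
            rw [Finset.mul_sum]
            refine Finset.sum_congr rfl fun i _ => ?_
            rw [← mul_assoc, hrel, add_mul, pow_succ', mul_assoc]
        _ = ∑ i ∈ Finset.range (ν + 1), φ (σ (g i)) * X ^ (i+1)
            + ∑ i ∈ Finset.range (ν + 1), φ (δ (g i)) * X ^ i := by
            rw [Finset.sum_add_distrib]
        _ = ∑ i ∈ Finset.range (ν + 2), φ (h i) * X ^ i := by
            rw [Finset.sum_range_succ' (fun i => φ (h i) * X ^ i) (ν + 1), k1]
            have hsplit : ∑ i ∈ Finset.range (ν + 1), φ (δ (g i)) * X ^ i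
                = ∑ i ∈ Finset.range (ν + 1), φ (δ (g (i+1))) * X ^ (i+1)
                  + φ (δ (g 0)) * X ^ 0 := by
              have h5 := Finset.sum_range_succ' (fun i => φ (δ (g i)) * X ^ i) (ν + 1)
              rw [Finset.sum_range_succ (fun i => φ (δ (g i)) * X ^ i) (ν+1), hgtop] at h5
              simpa using h5
            have hA : ∑ i ∈ Finset.range (ν + 1), φ (h (i+1)) * X ^ (i+1)
                = ∑ i ∈ Finset.range (ν + 1), φ (σ (g i)) * X ^ (i+1)
                  + ∑ i ∈ Finset.range (ν + 1), φ (δ (g (i+1))) * X ^ (i+1) := by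
              rw [← Finset.sum_add_distrib]
              refine Finset.sum_congr rfl fun i hi => ?_
              rw [k2 i (by simpa [Nat.lt_succ_iff] using hi), map_add, add_mul]
            rw [hA, hsplit]
            abel
end Aux2

section Aux3
variable {k : Type*} [Field k] {R : Type*} [Ring R] [Algebra k R]
variable (σ : R ≃ₐ[k] R) (δ : R →ₗ[k] R) (q : k)
variable {S : Type*} [Ring S] [Algebra k S] (φ : R →ₐ[k] S) (X : S)

lemma sig_iter_add : ∀ (i : ℕ) (x y : R), (⇑σ)^[i] (x + y) = (⇑σ)^[i] x + (⇑σ)^[i] y := by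
  intro i
  induction i with
  | zero => simp
  | succ i ih => intro x y; simp [Function.iterate_succ_apply, map_add, ih]

noncomputable def Emap : (ℕ →₀ R) →+ S :=
  Finsupp.liftAddHom fun t => (AddMonoidHom.mulRight (X ^ t)).comp (φ : R →+* S).toAddMonoidHom

lemma Emap_apply (c : ℕ →₀ R) :
    Emap φ X c = ∑ i ∈ c.support, φ (c i) * X ^ i := by
  rw [Emap, Finsupp.liftAddHom_apply]
  rfl

lemma Emap_single (t : ℕ) (r : R) : Emap φ X (Finsupp.single t r) = φ r * X ^ t := by
  rw [Emap, Finsupp.liftAddHom_apply_single]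
  rfl

variable (hq : ∀ a : R, q • σ (δ a) = δ (σ a))
variable (hrel : ∀ r : R, X * (φ r) = φ (σ r) * X + φ (δ r))
include hq hrel

lemma expand (a : R) (n : ℕ) : ∀ m : ℕ, 1 ≤ m → ∃ c : ℕ →₀ R,
    ((φ a * X ^ n) ^ m = ∑ i ∈ c.support, φ (c i) * X ^ i) ∧
    ∀ j, c j ∈ AddSubmonoid.closure {r : R | ∃ L : List ℕ, L.length + 1 = m ∧
      (∀ i ∈ L, i ≤ n) ∧ L.sum + n = j ∧
      nestProd a (fun i b => qBinom q n i • (⇑σ)^[i] ((⇑δ)^[n - i] b)) L = r} := by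
  set F : ℕ → R → R := fun i b => qBinom q n i • (⇑σ)^[i] ((⇑δ)^[n - i] b) with hF
  have hF0 : ∀ i, F i 0 = 0 := by
    intro i; simp only [hF, iter_zero, sig_iter_zero, smul_zero]
  have hFadd : ∀ i x y, F i (x + y) = F i x + F i y := by
    intro i x y; simp only [hF, iter_add, sig_iter_add, smul_add]
  intro m hm1
  induction m, hm1 using Nat.le_induction with
  | base =>
      refine ⟨Finsupp.single n a, ?_, ?_⟩
      · rw [pow_one, ← Emap_apply, Emap_single]
      · intro j
        by_cases hj : j = n
        · subst hj
          rw [Finsupp.single_eq_same]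
          exact AddSubmonoid.subset_closure ⟨[], by simp, by simp, by simp, rfl⟩
        · rw [Finsupp.single_eq_of_ne' (fun h => hj h.symm)]
          exact zero_mem _
  | succ m hm ih =>
      obtain ⟨c, hc1, hc2⟩ := ih
      set c' : ℕ →₀ R := ∑ j ∈ c.support, ∑ i ∈ Finset.range (n+1),
        Finsupp.single (i + j) (a * F i (c j)) with hc'
      refine ⟨c', ?_, ?_⟩
      · rw [← Emap_apply, hc', map_sum]
        have : ∀ j ∈ c.support, (Emap φ X) (∑ i ∈ Finset.range (n+1),
            Finsupp.single (i + j) (a * F i (c j)))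
            = ∑ i ∈ Finset.range (n+1), φ (a * F i (c j)) * X ^ (i + j) := by
          intro j _
          rw [map_sum]
          exact Finset.sum_congr rfl fun i _ => Emap_single φ X _ _
        rw [Finset.sum_congr rfl this, pow_succ' (φ a * X ^ n) m, hc1, Finset.mul_sum]
        refine Finset.sum_congr rfl fun j _ => ?_
        rw [mul_assoc (φ a) (X ^ n), ← mul_assoc (X ^ n), pow_X_mul σ δ q φ X hq hrel n (c j),
          Finset.sum_mul, Finset.mul_sum]
        refine Finset.sum_congr rfl fun i _ => ?_
        rw [pow_add, map_mul]
        show φ a * (φ (F i (c j)) * X ^ i * X ^ j) = φ a * φ (F i (c j)) * (X ^ i * X ^ j)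
        rw [mul_assoc (φ (F i (c j))), mul_assoc]
      · intro t
        rw [hc', Finsupp.finset_sum_apply]
        refine AddSubmonoid.sum_mem _ fun j hj => ?_
        rw [Finsupp.finset_sum_apply]
        refine AddSubmonoid.sum_mem _ fun i hi => ?_
        rw [Finsupp.single_apply]
        by_cases hij : i + j = t
        · rw [if_pos hij]
          subst hij
          have key : ∀ r, r ∈ AddSubmonoid.closure {r : R | ∃ L : List ℕ, L.length + 1 = m ∧
              (∀ i ∈ L, i ≤ n) ∧ L.sum + n = j ∧ nestProd a F L = r} →
              a * F i r ∈ AddSubmonoid.closure {r : R | ∃ L : List ℕ, L.length + 1 = m + 1 ∧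
              (∀ i' ∈ L, i' ≤ n) ∧ L.sum + n = i + j ∧ nestProd a F L = r} := by
            intro r hr
            induction hr using AddSubmonoid.closure_induction with
            | mem x hx =>
                obtain ⟨L, hL1, hL2, hL3, hL4⟩ := hx
                refine AddSubmonoid.subset_closure ⟨i :: L, by simp [hL1], ?_, ?_, ?_⟩
                · intro x hx
                  rcases List.mem_cons.mp hx with h | h
                  · subst h; exact Nat.lt_succ_iff.mp (Finset.mem_range.mp hi)
                  · exact hL2 x h
                · simp only [List.sum_cons]; omega
                · rw [← hL4]; rfl
            | zero => rw [hF0, mul_zero]; exact zero_mem _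
            | add x y _ _ hx hy => rw [hFadd, mul_add]; exact add_mem hx hy
          exact key (c j) (hc2 j)
        · rw [if_neg hij]
          exact zero_mem _

end Aux3


/-- If `m > dn/(n−N)` (i.e. `m·(n−N) > d·n`), then every iterated product with
index sum `(d−1)·n` vanishes, and hence the coefficient of `x^{dn}` in `(a xⁿ)^m`
is zero. -/
theorem ore_coeff_vanishes {k : Type*} [Field k] {R : Type*} [Ring R] [Algebra k R]
    (σ : R ≃ₐ[k] R) (δ : R →ₗ[k] R)
    (hleib : ∀ a b : R, δ (a * b) = σ a * δ b + δ a * b)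
    (q : k) (hq0 : q ≠ 0)
    (hq : ∀ a : R, q • σ (δ a) = δ (σ a))
    (hln : ∀ a : R, ∃ n : ℕ, (⇑δ)^[n] a = 0)
    {S : Type*} [Ring S] [Algebra k S] (φ : R →ₐ[k] S) (hφ : Function.Injective φ)
    (X : S)
    (hbasis : ∀ s : S, ∃! p : ℕ →₀ R, s = ∑ i ∈ p.support, φ (p i) * X ^ i)
    (hrel : ∀ r : R, X * (φ r) = φ (σ r) * X + φ (δ r))
    (a : R) (N : ℕ) (hN : N = nildeg (⇑δ) a) (n : ℕ) (hn : N < n)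
    (d : ℕ) (hd : 1 ≤ d) (m : ℕ) (hm : 1 ≤ m)
    (hmd : d * n < m * (n - N)) :
    (∀ ι : Fin (m - 1) → Fin (n + 1), (∑ j, (ι j : ℕ)) = (d - 1) * n →
      nestProd a (fun i b => qBinom q n i • (⇑σ)^[i] ((⇑δ)^[n - i] b))
        (List.ofFn (fun j => (ι j : ℕ))) = 0) ∧
    (∀ p : ℕ →₀ R, (φ a * X ^ n) ^ m = ∑ i ∈ p.support, φ (p i) * X ^ i →
      p (d * n) = 0) := by
  have hNa : (⇑δ)^[N] a = 0 := by
    rw [hN, nildeg]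
    exact Nat.sInf_mem (hln a)
  -- arithmetic facts
  have hmul : m * (n - N) + m * N = m * n := by
    rw [← Nat.mul_add]
    congr 1
    omega
  have h1 : d * n + m * N < m * n := by omega
  have h2 : (d - 1) * n + n = d * n := by
    rw [← Nat.succ_mul, Nat.succ_eq_add_one]
    congr 1
    omega
  have h3 : (m - 1) * n + n = m * n := by
    rw [← Nat.succ_mul, Nat.succ_eq_add_one]
    congr 1
    omega
  have key : ∀ L : List ℕ, (∀ i ∈ L, i ≤ n) → L.length + 1 = m → L.sum + n = d * n →
      nestProd a (fun i b => qBinom q n i • (⇑σ)^[i] ((⇑δ)^[n - i] b)) L = 0 := by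
    intro L hLe hLl hLs
    have harith : (L.length + 1) * N + L.sum ≤ 0 + L.length * n := by
      have e1 : (L.length + 1) * N = m * N := by rw [hLl]
      have e2 : L.length * n + n = m * n := by
        have : L.length = m - 1 := by omega
        rw [this, h3]
      omega
    have := nest_zero σ δ q hq hleib a N hNa n L hLe 0 harith
    simpa using this
  constructor
  · intro ι hι
    apply key
    · intro i hi
      obtain ⟨j, hj⟩ := List.mem_ofFn.mp hi
      have hji : (ι j : ℕ) = i := hj
      exact hji ▸ Nat.lt_succ_iff.mp (ι j).isLt
    · simp only [List.length_ofFn]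
      omega
    · rw [List.sum_ofFn, hι, h2]
  · intro p hp
    obtain ⟨c, hc1, hc2⟩ := expand σ δ q φ X hq hrel a n m hm
    obtain ⟨p₀, _, huniq⟩ := hbasis ((φ a * X ^ n) ^ m)
    have hpc : p = c := (huniq p hp).trans (huniq c hc1).symm
    rw [hpc]
    have hle : AddSubmonoid.closure {r : R | ∃ L : List ℕ, L.length + 1 = m ∧
        (∀ i ∈ L, i ≤ n) ∧ L.sum + n = d * n ∧
        nestProd a (fun i b => qBinom q n i • (⇑σ)^[i] ((⇑δ)^[n - i] b)) L = r} ≤ ⊥ := by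
      rw [AddSubmonoid.closure_le]
      intro x hx
      obtain ⟨L, hL1, hL2, hL3, hL4⟩ := hx
      have : x = 0 := by rw [← hL4]; exact key L hL2 hL1 hL3
      simp [this]
    exact AddSubmonoid.mem_bot.mp (hle (hc2 (d * n)))
end

section
/- (Well-definedness of Ore power series) Let R be a ring, σ an endomorphism of R, and δ a locally nilpotent σ-derivation. Then the multiplication on R[x;σ,δ] extends to a well-defined associative multiplication on the power series module R[[x;σ,δ]]: for power series f = Σ a_i x^i and g = Σ b_j x^j, each coefficient of f·g (computed via xⁿ·b = Σ_i c_{n,i}(b) x^i with c_{n,i} sums of compositions of σ and δ) is a finite sum. -/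
/-- The coefficient maps `c_{n,i}` determined by `xⁿ·b = Σ_i c_{n,i}(b)·x^i` in an
Ore extension with `x·r = σ(r)·x + δ(r)`: they satisfy
`c_{0,0} = id`, `c_{0,i+1} = 0`, `c_{n+1,0} = δ ∘ c_{n,0}`, and
`c_{n+1,i+1} = σ ∘ c_{n,i} + δ ∘ c_{n,i+1}`; each `c_{n,i}` is a sum of
compositions of `σ` and `δ`. -/
def oreCoeff {R : Type*} [Ring R] (σ : R →+* R) (δ : R →+ R) : ℕ → ℕ → R → R
  | 0, 0, b => b
  | 0, _ + 1, _ => 0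
  | n + 1, 0, b => δ (oreCoeff σ δ n 0 b)
  | n + 1, i + 1, b => σ (oreCoeff σ δ n i b) + δ (oreCoeff σ δ n (i + 1) b)

/-- Well-definedness of Ore power series: if `δ` is a locally nilpotent
`σ`-derivation, then each coefficient of a product of power series in
`R[[x;σ,δ]]` is a finite sum, i.e. for each `b ∈ R` and each target degree `i`,
only finitely many `n` contribute a nonzero `c_{n,i}(b)`. -/
theorem ore_power_series_well_defined {R : Type*} [Ring R]
    (σ : R →+* R) (δ : R →+ R)
    (hleib : ∀ a b : R, δ (a * b) = σ a * δ b + δ a * b)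
    (hln : ∀ a : R, ∃ n : ℕ, (⇑δ)^[n] a = 0) :
    ∀ (b : R) (i : ℕ), {n : ℕ | oreCoeff σ δ n i b ≠ 0}.Finite := by
  have key : ∀ (i : ℕ) (b : R), ∃ N : ℕ, ∀ n, N ≤ n → oreCoeff σ δ n i b = 0 := by
    intro i
    induction i with
    | zero =>
      intro b
      obtain ⟨m, hm⟩ := hln b
      have h0 : ∀ k, oreCoeff σ δ k 0 b = (⇑δ)^[k] b := by
        intro k
        induction k with
        | zero => rfl
        | succ k ih =>
          show δ (oreCoeff σ δ k 0 b) = _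
          rw [ih]; exact (Function.iterate_succ_apply' _ _ _).symm
      refine ⟨m, fun n hn => ?_⟩
      obtain ⟨j, rfl⟩ := Nat.exists_eq_add_of_le hn
      rw [h0, Nat.add_comm, Function.iterate_add_apply, hm]
      exact Function.iterate_fixed (map_zero δ) j
    | succ i ih =>
      intro b
      obtain ⟨N, hN⟩ := ih b
      have step : ∀ n, N ≤ n →
          oreCoeff σ δ (n + 1) (i + 1) b = δ (oreCoeff σ δ n (i + 1) b) := by
        intro n hn
        show σ (oreCoeff σ δ n i b) + δ (oreCoeff σ δ n (i + 1) b) = _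
        rw [hN n hn, map_zero, zero_add]
      have iter : ∀ k, oreCoeff σ δ (N + k) (i + 1) b
          = (⇑δ)^[k] (oreCoeff σ δ N (i + 1) b) := by
        intro k
        induction k with
        | zero => rfl
        | succ k ihk =>
          rw [← Nat.add_assoc, step (N + k) (Nat.le_add_right N k), ihk]
          exact (Function.iterate_succ_apply' _ _ _).symm
      obtain ⟨m, hm⟩ := hln (oreCoeff σ δ N (i + 1) b)
      refine ⟨N + m, fun n hn => ?_⟩
      obtain ⟨j, rfl⟩ := Nat.exists_eq_add_of_le hn
      rw [Nat.add_assoc, iter, Nat.add_comm m j, Function.iterate_add_apply, hm]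
      exact Function.iterate_fixed (map_zero δ) j
  intro b i
  obtain ⟨N, hN⟩ := key i b
  refine Set.Finite.subset (Set.finite_Iio N) ?_
  intro n hn
  by_contra h
  exact hn (hN n (Nat.le_of_not_lt h))
end
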